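/- Let (X, d) be a metric space and define the probabilistic metric α_d(x,y,t) = 0 if t ≤ d(x,y) and α_d(x,y,t) = 1 if t > d(x,y). Then for all x ∈ X and A ⊆ X, δ_{α_d}(x,A) = inf_{a∈A} d(x,a) (with the convention inf ∅ = ∞). Consequently, every metric approach space is *-metrizable for every continuous t-norm * on [0,1]. -/

import Mathlib

open scoped ENNReal

/-- A distance distribution: a map `[0,∞] → [0,1]` with value `0` at `0`, `1` at `∞`,
monotone and left-continuous on `(0,∞)`. -/
structure IsDistanceDistribution (φ : ℝ≥0∞ → ℝ) : Prop where
  mem : ∀ t, φ t ∈ Set.Icc (0:ℝ) 1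
  zero : φ 0 = 0
  top : φ ⊤ = 1
  mono : Monotone φ
  leftCont : ∀ t : ℝ≥0∞, 0 < t → t ≠ ⊤ → φ t = ⨆ s : {s : ℝ≥0∞ // s < t}, φ s.1

/-- A continuous t-norm on the interval `[a,b] ⊆ ℝ`. -/
structure IsContinuousTNorm (a b : ℝ) (m : ℝ → ℝ → ℝ) : Prop where
  mem : ∀ ⦃p q : ℝ⦄, p ∈ Set.Icc a b → q ∈ Set.Icc a b → m p q ∈ Set.Icc a b
  comm : ∀ ⦃p q : ℝ⦄, p ∈ Set.Icc a b → q ∈ Set.Icc a b → m p q = m q p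
  assoc : ∀ ⦃p q r : ℝ⦄, p ∈ Set.Icc a b → q ∈ Set.Icc a b → r ∈ Set.Icc a b →
    m (m p q) r = m p (m q r)
  unit : ∀ ⦃p : ℝ⦄, p ∈ Set.Icc a b → m p b = p
  mono : ∀ ⦃p p' q q' : ℝ⦄, p ∈ Set.Icc a b → p' ∈ Set.Icc a b → q ∈ Set.Icc a b →
    q' ∈ Set.Icc a b → p ≤ p' → q ≤ q' → m p q ≤ m p' q'
  continuous : ContinuousOn (fun x : ℝ × ℝ => m x.1 x.2) (Set.Icc a b ×ˢ Set.Icc a b)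

/-- `α` is a probabilistic metric on `X` with respect to the t-norm `m` on `[0,1]`. -/
structure IsProbMetric {X : Type*} (m : ℝ → ℝ → ℝ) (α : X → X → ℝ≥0∞ → ℝ) : Prop where
  dd : ∀ x y, IsDistanceDistribution (α x y)
  refl : ∀ x (t : ℝ≥0∞), 0 < t → α x x t = 1
  symm : ∀ x y t, α x y t = α y x t
  sep : ∀ x y, (∀ t : ℝ≥0∞, 0 < t → α x y t = 1) → x = y
  triangle : ∀ x y z (r s : ℝ≥0∞), m (α y z r) (α x y s) ≤ α x z (r + s)

/-- The approach distance induced by a probabilistic metric: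
`δ_α(x,A) = inf { r | sup_{a ∈ A} α(x,a,r) = 1 }`. -/
noncomputable def probDist {X : Type*} (α : X → X → ℝ≥0∞ → ℝ) (x : X) (A : Set X) : ℝ≥0∞ :=
  sInf {r : ℝ≥0∞ | sSup ((fun a => α x a r) '' A) = 1}

/-- `δ` is an approach structure on `X`. -/
structure IsApproach {X : Type*} (δ : X → Set X → ℝ≥0∞) : Prop where
  point : ∀ x, δ x {x} = 0
  empty : ∀ x, δ x (∅ : Set X) = ⊤
  union : ∀ x A B, δ x (A ∪ B) = min (δ x A) (δ x B)
  triangle : ∀ x (A B : Set X), δ x A ≤ (⨆ b : B, δ b.1 A) + δ x B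

/-- An approach structure is probabilistic metrizable w.r.t. the t-norm `m`. -/
def ProbMetrizable {X : Type*} (m : ℝ → ℝ → ℝ) (δ : X → Set X → ℝ≥0∞) : Prop :=
  ∃ α : X → X → ℝ≥0∞ → ℝ, IsProbMetric m α ∧ ∀ x A, δ x A = probDist α x A

/-- The minimum t-norm. -/
def minT : ℝ → ℝ → ℝ := fun p q => min p q
/-- The product t-norm. -/
def prodT : ℝ → ℝ → ℝ := fun p q => p * q
/-- The Łukasiewicz t-norm. -/
def lukT : ℝ → ℝ → ℝ := fun p q => max 0 (p + q - 1)

/-- `q⁻`: the largest idempotent element of `m` in `[a, q]`. -/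
noncomputable def idemBelow (a : ℝ) (m : ℝ → ℝ → ℝ) (q : ℝ) : ℝ :=
  sSup {p : ℝ | p ∈ Set.Icc a q ∧ m p p = p}

private lemma sInf_Ioi_enn (c : ℝ≥0∞) : sInf (Set.Ioi c) = c := by
  refine le_antisymm ?_ (le_sInf fun r hr => (le_of_lt hr))
  by_contra hlt
  push_neg at hlt
  obtain ⟨r, hr1, hr2⟩ := exists_between hlt
  exact absurd (sInf_le (show r ∈ Set.Ioi c from hr1)) (not_le.2 hr2)

private lemma probDist_eq {X : Type*} [MetricSpace X]
    (αd : X → X → ℝ≥0∞ → ℝ)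
    (hαd : ∀ x y t, αd x y t = if t ≤ ENNReal.ofReal (dist x y) then 0 else 1)
    (x : X) (A : Set X) : probDist αd x A = ⨅ a : A, ENNReal.ofReal (dist x a.1) := by
  rcases A.eq_empty_or_nonempty with rfl | ⟨a0, ha0⟩
  · have : {r : ℝ≥0∞ | sSup ((fun a => αd x a r) '' (∅ : Set X)) = 1} = ∅ := by
      ext r
      simp [Real.sSup_empty]
    rw [probDist, this, sInf_empty]
    simp [iInf_of_empty]
  · have hkey : ∀ r : ℝ≥0∞, sSup ((fun a => αd x a r) '' A) = 1 ↔
        ∃ a ∈ A, ENNReal.ofReal (dist x a) < r := by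
      intro r
      constructor
      · intro hsup
        by_contra hno
        push_neg at hno
        have himg : ∀ v ∈ (fun a => αd x a r) '' A, v ≤ 0 := by
          rintro v ⟨a, ha, rfl⟩
          show αd x a r ≤ 0
          rw [hαd, if_pos (hno a ha)]
        have := csSup_le (Set.Nonempty.image _ ⟨a0, ha0⟩) himg
        rw [hsup] at this
        linarith
      · rintro ⟨a, ha, hlt⟩
        have hbdd : BddAbove ((fun a => αd x a r) '' A) := by
          refine ⟨1, ?_⟩
          rintro v ⟨b, hb, rfl⟩
          show αd x b r ≤ 1
          rw [hαd]; split <;> norm_num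
        have h1 : αd x a r = 1 := by rw [hαd, if_neg (not_le.2 hlt)]
        refine le_antisymm ?_ ?_
        · refine csSup_le (Set.Nonempty.image _ ⟨a, ha⟩) ?_
          rintro v ⟨b, hb, rfl⟩
          show αd x b r ≤ 1
          rw [hαd]; split <;> norm_num
        · rw [← h1]
          exact le_csSup hbdd ⟨a, ha, rfl⟩
    have hset : {r : ℝ≥0∞ | sSup ((fun a => αd x a r) '' A) = 1}
        = Set.Ioi (⨅ a : A, ENNReal.ofReal (dist x a.1)) := by
      ext r
      rw [Set.mem_setOf_eq, hkey, Set.mem_Ioi, iInf_lt_iff]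
      constructor
      · rintro ⟨a, ha, h⟩; exact ⟨⟨a, ha⟩, h⟩
      · rintro ⟨⟨a, ha⟩, h⟩; exact ⟨a, ha, h⟩
    rw [probDist, hset, sInf_Ioi_enn]

theorem stmt14 {X : Type*} [MetricSpace X]
    (αd : X → X → ℝ≥0∞ → ℝ)
    (hαd : ∀ x y t, αd x y t = if t ≤ ENNReal.ofReal (dist x y) then 0 else 1) :
    (∀ (x : X) (A : Set X), probDist αd x A = ⨅ a : A, ENNReal.ofReal (dist x a.1)) ∧
    ∀ m : ℝ → ℝ → ℝ, IsContinuousTNorm 0 1 m →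
      ProbMetrizable m (fun (x : X) (A : Set X) => ⨅ a : A, ENNReal.ofReal (dist x a.1)) :=  by
  have hpd := probDist_eq αd hαd
  refine ⟨hpd, ?_⟩
  intro m hm
  have hm01 : ∀ p q : ℝ, p ∈ Set.Icc (0:ℝ) 1 → q ∈ Set.Icc (0:ℝ) 1 → m p q ≤ 1 :=
    fun p q hp hq => (hm.mem hp hq).2
  have hzero : ∀ q : ℝ, q ∈ Set.Icc (0:ℝ) 1 → m 0 q = 0 := by
    intro q hq
    have h01 : (0:ℝ) ∈ Set.Icc (0:ℝ) 1 := by norm_num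
    have h11 : (1:ℝ) ∈ Set.Icc (0:ℝ) 1 := by norm_num
    have hle : m 0 q ≤ m 0 1 := hm.mono h01 h01 hq h11 le_rfl hq.2
    have := (hm.mem h01 hq).1
    rw [hm.unit h01] at hle
    linarith
  have hmem : ∀ (x y : X) (t : ℝ≥0∞), αd x y t ∈ Set.Icc (0:ℝ) 1 := by
    intro x y t
    rw [hαd]; split <;> norm_num
  refine ⟨αd, ⟨?_, ?_, ?_, ?_, ?_⟩, fun x A => (hpd x A).symm⟩
  · -- dd
    intro x y
    refine ⟨hmem x y, ?_, ?_, ?_, ?_⟩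
    · rw [hαd, if_pos (zero_le : (0:ℝ≥0∞) ≤ _)]
    · rw [hαd, if_neg (not_le.2 ENNReal.ofReal_lt_top)]
    · intro s t hst
      rw [hαd, hαd]
      split
      · split <;> norm_num
      · rename_i hs
        rw [if_neg (fun ht => hs (hst.trans ht))]
    · intro t ht htop
      haveI : Nonempty {s : ℝ≥0∞ // s < t} := ⟨⟨0, ht⟩⟩
      by_cases hc : t ≤ ENNReal.ofReal (dist x y)
      · rw [hαd, if_pos hc]
        have hall : ∀ s : {s : ℝ≥0∞ // s < t}, αd x y s.1 = 0 := by
          intro s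
          rw [hαd, if_pos (le_of_lt (lt_of_lt_of_le s.2 hc))]
        rw [show (fun s : {s : ℝ≥0∞ // s < t} => αd x y s.1) = fun _ => (0:ℝ) from funext hall]
        exact (ciSup_const).symm
      · push_neg at hc
        rw [hαd, if_neg (not_le.2 hc)]
        obtain ⟨s, hs1, hs2⟩ := exists_between hc
        have hbdd : BddAbove (Set.range (fun s : {s : ℝ≥0∞ // s < t} => αd x y s.1)) := by
          refine ⟨1, ?_⟩
          rintro v ⟨u, rfl⟩
          exact (hmem x y u.1).2
        refine le_antisymm ?_ (ciSup_le fun u => (hmem x y u.1).2)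
        have : αd x y s = 1 := by rw [hαd, if_neg (not_le.2 hs1)]
        calc (1:ℝ) = αd x y s := this.symm
          _ ≤ _ := le_ciSup hbdd (⟨s, hs2⟩ : {s : ℝ≥0∞ // s < t})
  · -- refl
    intro x t ht
    rw [hαd]
    rw [if_neg]
    simp [dist_self]
    exact ht.ne'
  · -- symm
    intro x y t
    rw [hαd, hαd, dist_comm]
  · -- sep
    intro x y h
    have hc : ENNReal.ofReal (dist x y) = 0 := by
      by_contra hne
      have hpos : 0 < ENNReal.ofReal (dist x y) := pos_iff_ne_zero.2 hne
      have := h _ hpos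
      rw [hαd, if_pos le_rfl] at this
      linarith
    rw [ENNReal.ofReal_eq_zero] at hc
    exact eq_of_dist_eq_zero (le_antisymm hc dist_nonneg)
  · -- triangle
    intro x y z r s
    by_cases hz : r + s ≤ ENNReal.ofReal (dist x z)
    · -- RHS = 0; show LHS = 0
      have hrhs : αd x z (r + s) = 0 := by rw [hαd, if_pos hz]
      rw [hrhs]
      have hor : r ≤ ENNReal.ofReal (dist y z) ∨ s ≤ ENNReal.ofReal (dist x y) := by
        by_contra hno
        push_neg at hno
        obtain ⟨h1, h2⟩ := hno
        have hsum : ENNReal.ofReal (dist y z) + ENNReal.ofReal (dist x y) < r + s :=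
          ENNReal.add_lt_add h1 h2
        have htri : ENNReal.ofReal (dist x z)
            ≤ ENNReal.ofReal (dist y z) + ENNReal.ofReal (dist x y) := by
          rw [← ENNReal.ofReal_add dist_nonneg dist_nonneg]
          refine ENNReal.ofReal_le_ofReal ?_
          calc dist x z ≤ dist x y + dist y z := dist_triangle x y z
            _ = dist y z + dist x y := by rw [add_comm]
        exact lt_irrefl _ (lt_of_le_of_lt (hz.trans htri) hsum)
      rcases hor with h | h
      · have : αd y z r = 0 := by rw [hαd, if_pos h]
        rw [this, hzero _ (hmem x y s)]
      · have h0 : αd x y s = 0 := by rw [hαd, if_pos h]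
        rw [hm.comm (hmem y z r) (hmem x y s), h0, hzero _ (hmem y z r)]
    · push_neg at hz
      have hrhs : αd x z (r + s) = 1 := by rw [hαd, if_neg (not_le.2 hz)]
      rw [hrhs]
      exact hm01 _ _ (hmem y z r) (hmem x y s)
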